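/- Let ρ > 0 and define, for J ∈ M₃(ℝ), W(J) = 𝓕[ρ M_J] and V(J) = ½∥J∥² − ρ ln Z(J). Then: (i) W(J) = V(J) − ½∥J − ρ 𝒥[M_J]∥² + ρ ln ρ for all J ∈ M₃(ℝ); and (ii) J is a critical point of W (DW(J) = 0) if and only if J is a critical point of V (DV(J) = 0), which holds if and only if J = ρ 𝒥[M_J]. -/

import Mathlib

open Matrix MeasureTheory

/-- The space of `3 × 3` real matrices. -/
abbrev Mat3 := Matrix (Fin 3) (Fin 3) ℝ

instance : MeasurableSpace Mat3 := inferInstanceAs (MeasurableSpace (Fin 3 → Fin 3 → ℝ))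

@[reducible] def mat3Top : TopologicalSpace Mat3 :=
  (Matrix.normedAddCommGroup : NormedAddCommGroup Mat3).toUniformSpace.toTopologicalSpace

section TopSec

attribute [local instance] mat3Top

instance : BorelSpace Mat3 := inferInstanceAs (BorelSpace (Fin 3 → Fin 3 → ℝ))

attribute [local instance] Matrix.normedAddCommGroup Matrix.normedSpace

/-- `SO₃(ℝ)`: real `3 × 3` matrices with `AᵀA = I₃` and `det A = 1`. -/
def SO3 : Set Mat3 := {A | Aᵀ * A = 1 ∧ A.det = 1}

/-- The inner product `A·B = ½ Tr(ABᵀ)` on `M₃(ℝ)`. -/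
noncomputable def mdot (A B : Mat3) : ℝ := (1 / 2) * (A * Bᵀ).trace

/-- `μ` is the Haar probability measure of `SO₃(ℝ)`, viewed as a measure on `M₃(ℝ)`. -/
def IsHaarSO3 (μ : Measure Mat3) : Prop :=
  IsProbabilityMeasure μ ∧ μ SO3ᶜ = 0 ∧
    ∀ P ∈ SO3, Measure.map (fun A => P * A) μ = μ

/-- The normalization constant `Z(J) = ∫ exp(J·A) dμ(A)`. -/
noncomputable def Z (μ : Measure Mat3) (J : Mat3) : ℝ := ∫ A, Real.exp (mdot J A) ∂μ

/-- The generalized von Mises density `M_J(A) = exp(J·A)/Z(J)`. -/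
noncomputable def vonMises (μ : Measure Mat3) (J : Mat3) (A : Mat3) : ℝ :=
  Real.exp (mdot J A) / Z μ J

/-- The first moment `𝒥[f] = ∫ A f(A) dμ(A)`, taken entrywise. -/
noncomputable def Jcal (μ : Measure Mat3) (f : Mat3 → ℝ) : Mat3 :=
  Matrix.of fun i j => ∫ A, f A * A i j ∂μ

/-- The free energy `𝓕[f] = ∫ f ln f dμ − ½∥𝒥[f]∥²`. -/
noncomputable def freeEnergy (μ : Measure Mat3) (f : Mat3 → ℝ) : ℝ :=
  (∫ A, f A * Real.log (f A) ∂μ) - (1 / 2) * mdot (Jcal μ f) (Jcal μ f)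

/-- The potential `V(J) = ½∥J∥² − ρ ln Z(J)`. -/
noncomputable def V (μ : Measure Mat3) (ρ : ℝ) (J : Mat3) : ℝ :=
  (1 / 2) * mdot J J - ρ * Real.log (Z μ J)

/-- The function `W(J) = 𝓕[ρ M_J]`. -/
noncomputable def W (μ : Measure Mat3) (ρ : ℝ) (J : Mat3) : ℝ :=
  freeEnergy μ (fun A => ρ * vonMises μ J A)

lemma mdot_eq_sum (A B : Mat3) : mdot A B = (∑ i, ∑ j, A i j * B i j) / 2 := by
  simp [mdot, Matrix.trace, Matrix.diag, Matrix.mul_apply, Matrix.transpose_apply]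
  ring

lemma mdot_comm (A B : Mat3) : mdot A B = mdot B A := by
  simp only [mdot_eq_sum]
  congr 1; exact Finset.sum_congr rfl fun i _ => Finset.sum_congr rfl fun j _ => mul_comm _ _

lemma mdot_add_left (A B C : Mat3) : mdot (A + B) C = mdot A C + mdot B C := by
  simp only [mdot_eq_sum]
  simp [Matrix.add_apply, add_mul, Finset.sum_add_distrib]
  ring

lemma mdot_smul_left (c : ℝ) (A B : Mat3) : mdot (c • A) B = c * mdot A B := by
  simp only [mdot_eq_sum]
  simp [Matrix.smul_apply, smul_eq_mul, mul_assoc, ← Finset.mul_sum]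
  ring

lemma mdot_sub_left (A B C : Mat3) : mdot (A - B) C = mdot A C - mdot B C := by
  simp only [mdot_eq_sum]
  simp [Matrix.sub_apply, sub_mul, Finset.sum_sub_distrib]
  ring

lemma mdot_zero_left (B : Mat3) : mdot 0 B = 0 := by simp [mdot_eq_sum]

lemma mdot_add_right (A B C : Mat3) : mdot A (B + C) = mdot A B + mdot A C := by
  rw [mdot_comm, mdot_add_left, mdot_comm B, mdot_comm C]

lemma mdot_smul_right (c : ℝ) (A B : Mat3) : mdot A (c • B) = c * mdot A B := by
  rw [mdot_comm, mdot_smul_left, mdot_comm]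

lemma mdot_sub_right (A B C : Mat3) : mdot A (B - C) = mdot A B - mdot A C := by
  rw [mdot_comm, mdot_sub_left, mdot_comm B, mdot_comm C]

lemma mdot_zero_right (B : Mat3) : mdot B 0 = 0 := by rw [mdot_comm, mdot_zero_left]

lemma mdot_self_nonneg (A : Mat3) : 0 ≤ mdot A A := by
  rw [mdot_eq_sum]
  apply div_nonneg _ (by norm_num)
  exact Finset.sum_nonneg fun i _ => Finset.sum_nonneg fun j _ => mul_self_nonneg _

lemma eq_zero_of_mdot_self (A : Mat3) (h : mdot A A = 0) : A = 0 := by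
  rw [mdot_eq_sum, div_eq_zero_iff] at h
  have h' := h.resolve_right (by norm_num)
  have hz : ∀ i ∈ Finset.univ, ∀ j ∈ (Finset.univ : Finset (Fin 3)), A i j * A i j = 0 := by
    have h1 := (Finset.sum_eq_zero_iff_of_nonneg (fun i _ =>
      Finset.sum_nonneg fun j _ => mul_self_nonneg (A i j))).mp h'
    intro i hi j hj
    exact (Finset.sum_eq_zero_iff_of_nonneg (fun j _ => mul_self_nonneg (A i j))).mp (h1 i hi) j hj
  ext i j
  have := hz i (Finset.mem_univ i) j (Finset.mem_univ j)
  simpa [mul_self_eq_zero] using this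

lemma abs_mdot_le (A B : Mat3) : |mdot A B| ≤ 9 / 2 * ‖A‖ * ‖B‖ := by
  rw [mdot_eq_sum, abs_div]
  rw [abs_of_nonneg (by norm_num : (0:ℝ) ≤ 2)]
  rw [div_le_iff₀ (by norm_num : (0:ℝ) < 2)]
  calc |∑ i, ∑ j, A i j * B i j| ≤ ∑ i, ∑ j, |A i j * B i j| := by
        refine (Finset.abs_sum_le_sum_abs _ _).trans ?_
        exact Finset.sum_le_sum fun i _ => Finset.abs_sum_le_sum_abs _ _
    _ ≤ ∑ _i : Fin 3, ∑ _j : Fin 3, ‖A‖ * ‖B‖ := by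
        refine Finset.sum_le_sum fun i _ => Finset.sum_le_sum fun j _ => ?_
        rw [abs_mul]
        exact mul_le_mul (A.norm_entry_le_entrywise_sup_norm)
          (B.norm_entry_le_entrywise_sup_norm) (abs_nonneg _) (norm_nonneg _)
    _ = 9 * (‖A‖ * ‖B‖) := by simp [Finset.sum_const]; ring
    _ = 9 / 2 * ‖A‖ * ‖B‖ * 2 := by ring

lemma continuous_entry (i j : Fin 3) : Continuous fun A : Mat3 => A i j :=
  (continuous_apply j).comp (continuous_apply i)

lemma continuous_mdot_right (B : Mat3) : Continuous fun A : Mat3 => mdot B A := by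
  simp only [mdot_eq_sum]
  exact (continuous_finset_sum _ fun i _ => continuous_finset_sum _ fun j _ =>
    (continuous_const.mul (continuous_entry i j))).div_const 2

lemma SO3.entry_abs_le {A : Mat3} (hA : A ∈ SO3) (i j : Fin 3) : |A i j| ≤ 1 := by
  have h := congrArg (fun M : Mat3 => M j j) hA.1
  simp only [Matrix.mul_apply, Matrix.transpose_apply, Matrix.one_apply_eq] at h
  have hle : A i j * A i j ≤ 1 := by
    rw [← h]
    have : ∀ k ∈ Finset.univ, (0:ℝ) ≤ A k j * A k j := fun k _ => mul_self_nonneg _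
    exact Finset.single_le_sum this (Finset.mem_univ i)
  nlinarith [abs_nonneg (A i j), sq_abs (A i j)]

lemma SO3.norm_le {A : Mat3} (hA : A ∈ SO3) : ‖A‖ ≤ 1 := by
  rw [Matrix.norm_le_iff (by norm_num : (0:ℝ) ≤ 1)]
  intro i j
  simpa using SO3.entry_abs_le hA i j

lemma abs_mdot_le_of_SO3 (B : Mat3) {A : Mat3} (hA : A ∈ SO3) :
    |mdot B A| ≤ 9 / 2 * ‖B‖ := by
  calc |mdot B A| ≤ 9/2 * ‖B‖ * ‖A‖ := abs_mdot_le B A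
    _ ≤ 9/2 * ‖B‖ * 1 := by
        have := SO3.norm_le hA
        have h9 : (0:ℝ) ≤ 9/2 * ‖B‖ := by positivity
        nlinarith
    _ = 9/2 * ‖B‖ := by ring

noncomputable def mdotCLM (B : Mat3) : Mat3 →L[ℝ] ℝ :=
  LinearMap.toContinuousLinearMap
    { toFun := fun H => mdot B H
      map_add' := fun x y => mdot_add_right B x y
      map_smul' := fun c x => by simpa using mdot_smul_right c B x }

@[simp] lemma mdotCLM_apply (B H : Mat3) : mdotCLM B H = mdot B H := rfl

lemma mdotCLM_norm_le (B : Mat3) : ‖mdotCLM B‖ ≤ 9/2 * ‖B‖ := by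
  refine ContinuousLinearMap.opNorm_le_bound _ (by positivity) fun H => ?_
  simpa [Real.norm_eq_abs, mul_assoc] using abs_mdot_le B H

lemma mdotCLM_zero : mdotCLM 0 = 0 := by
  ext H; simp [mdot_zero_left]

noncomputable def mdotCLMlm : Mat3 →ₗ[ℝ] (Mat3 →L[ℝ] ℝ) :=
  { toFun := mdotCLM
    map_add' := fun x y => by ext H; simp [mdot_add_left]
    map_smul' := fun c x => by ext H; simp [mdot_smul_left] }

lemma continuous_mdotCLM : Continuous fun B : Mat3 => mdotCLM B :=
  mdotCLMlm.continuous_of_finiteDimensional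

section Meas
variable {μ : Measure Mat3}

lemma isProb (hμ : IsHaarSO3 μ) : IsProbabilityMeasure μ := hμ.1

lemma ae_SO3 (hμ : IsHaarSO3 μ) : ∀ᵐ A ∂μ, A ∈ SO3 := by
  rw [MeasureTheory.ae_iff]
  exact hμ.2.1

lemma integrable_of_bound (hμ : IsHaarSO3 μ) {f : Mat3 → ℝ} (C : ℝ)
    (hf : Continuous f) (h : ∀ A ∈ SO3, |f A| ≤ C) : Integrable f μ := by
  haveI := isProb hμ
  refine Integrable.mono' (integrable_const C) hf.aestronglyMeasurable ?_
  filter_upwards [ae_SO3 hμ] with A hA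
  simpa [Real.norm_eq_abs] using h A hA
end Meas

section Meas2
variable {μ : Measure Mat3}

lemma continuous_expmdot (J : Mat3) : Continuous fun A : Mat3 => Real.exp (mdot J A) :=
  Real.continuous_exp.comp (continuous_mdot_right J)

lemma integrable_exp_mul (hμ : IsHaarSO3 μ) (J : Mat3) {g : Mat3 → ℝ} (Cg : ℝ)
    (hgc : Continuous g) (hgb : ∀ A ∈ SO3, |g A| ≤ Cg) :
    Integrable (fun A => Real.exp (mdot J A) * g A) μ := by
  refine integrable_of_bound hμ (Real.exp (9/2 * ‖J‖) * Cg)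
    ((continuous_expmdot J).mul hgc) fun A hA => ?_
  rw [abs_mul, abs_of_nonneg (Real.exp_nonneg _)]
  have h1 : Real.exp (mdot J A) ≤ Real.exp (9/2 * ‖J‖) :=
    Real.exp_le_exp.mpr ((le_abs_self _).trans (abs_mdot_le_of_SO3 J hA))
  have h2 := hgb A hA
  have h3 : (0:ℝ) ≤ |g A| := abs_nonneg _
  nlinarith [Real.exp_nonneg (mdot J A)]

lemma integrable_exp (hμ : IsHaarSO3 μ) (J : Mat3) :
    Integrable (fun A => Real.exp (mdot J A)) μ := by
  simpa using integrable_exp_mul hμ J (g := fun _ => 1) 1 continuous_const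
    (fun A _ => by norm_num)

lemma Z_pos (hμ : IsHaarSO3 μ) (J : Mat3) : 0 < Z μ J := by
  haveI := isProb hμ
  have hle : Real.exp (-(9/2 * ‖J‖)) ≤ Z μ J := by
    rw [show Real.exp (-(9/2*‖J‖)) = ∫ _A, Real.exp (-(9/2*‖J‖)) ∂μ by simp]
    refine integral_mono_ae (integrable_const _) (integrable_exp hμ J) ?_
    filter_upwards [ae_SO3 hμ] with A hA
    apply Real.exp_le_exp.mpr
    have := abs_mdot_le_of_SO3 J hA
    have := neg_abs_le (mdot J A)
    linarith
  exact lt_of_lt_of_le (Real.exp_pos _) hle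

lemma Z_ne (hμ : IsHaarSO3 μ) (J : Mat3) : Z μ J ≠ 0 := (Z_pos hμ J).ne'

lemma integral_vonMises (hμ : IsHaarSO3 μ) (J : Mat3) :
    ∫ A, vonMises μ J A ∂μ = 1 := by
  simp only [vonMises, div_eq_mul_inv]
  rw [integral_mul_const]
  exact mul_inv_cancel₀ (Z_ne hμ J)

-- ∫ f(A) mdot B A = mdot B (matrix of ∫ f A kl)
lemma integral_mul_mdot (B : Mat3) {f : Mat3 → ℝ}
    (hint : ∀ k l : Fin 3, Integrable (fun A => f A * A k l) μ) :
    ∫ A, f A * mdot B A ∂μ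
      = mdot B (Matrix.of fun k l => ∫ A, f A * A k l ∂μ) := by
  have step : (fun A => f A * mdot B A)
      = fun A => (∑ k, ∑ l, B k l * (f A * A k l)) / 2 := by
    funext A
    rw [mdot_eq_sum]
    rw [mul_div_assoc']
    congr 1
    rw [Finset.mul_sum]
    refine Finset.sum_congr rfl fun k _ => ?_
    rw [Finset.mul_sum]
    exact Finset.sum_congr rfl fun l _ => by ring
  rw [step, mdot_eq_sum]
  rw [integral_div]
  congr 1
  rw [integral_finset_sum _ (fun k _ => integrable_finset_sum _
    (fun l _ => (hint k l).const_mul (B k l)))]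
  refine Finset.sum_congr rfl fun k _ => ?_
  rw [integral_finset_sum _ (fun l _ => (hint k l).const_mul (B k l))]
  refine Finset.sum_congr rfl fun l _ => ?_
  rw [integral_const_mul]
  simp [Matrix.of_apply]

lemma integrable_exp_entry (hμ : IsHaarSO3 μ) (J : Mat3) (k l : Fin 3) :
    Integrable (fun A => Real.exp (mdot J A) * A k l) μ :=
  integrable_exp_mul hμ J 1 (continuous_entry k l) (fun A hA => SO3.entry_abs_le hA k l)

lemma Jcal_vonMises_apply (hμ : IsHaarSO3 μ) (J : Mat3) (k l : Fin 3) :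
    Jcal μ (vonMises μ J) k l = (∫ A, Real.exp (mdot J A) * A k l ∂μ) / Z μ J := by
  simp only [Jcal, Matrix.of_apply, vonMises]
  rw [← integral_div]
  congr 1; funext A; ring

-- ∫ M_J(A) * mdot B A dμ = mdot B 𝒥
lemma integral_vonMises_mdot (hμ : IsHaarSO3 μ) (J B : Mat3) :
    ∫ A, vonMises μ J A * mdot B A ∂μ = mdot B (Jcal μ (vonMises μ J)) := by
  have hint : ∀ k l : Fin 3, Integrable (fun A => vonMises μ J A * A k l) μ := by
    intro k l
    have : (fun A => vonMises μ J A * A k l)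
        = fun A => (Z μ J)⁻¹ * (Real.exp (mdot J A) * A k l) := by
      funext A; simp [vonMises]; ring
    rw [this]
    exact (integrable_exp_entry hμ J k l).const_mul _
  rw [integral_mul_mdot B hint]
  rfl

end Meas2

section PartI
variable {μ : Measure Mat3}

lemma integrable_vonMises (hμ : IsHaarSO3 μ) (J : Mat3) :
    Integrable (vonMises μ J) μ := by
  have h : vonMises μ J = fun A => Real.exp (mdot J A) * (Z μ J)⁻¹ := by
    funext A; simp [vonMises, div_eq_mul_inv]
  rw [h]
  exact (integrable_exp hμ J).mul_const _

lemma integrable_vonMises_mdot (hμ : IsHaarSO3 μ) (J B : Mat3) :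
    Integrable (fun A => vonMises μ J A * mdot B A) μ := by
  have h : (fun A => vonMises μ J A * mdot B A)
      = fun A => (Z μ J)⁻¹ * (Real.exp (mdot J A) * mdot B A) := by
    funext A; simp [vonMises]; ring
  rw [h]
  exact (integrable_exp_mul hμ J (9/2*‖B‖) (continuous_mdot_right B)
    (fun A hA => abs_mdot_le_of_SO3 B hA)).const_mul _

lemma part_i (hμ : IsHaarSO3 μ) {ρ : ℝ} (hρ : 0 < ρ) (J : Mat3) :
    W μ ρ J = V μ ρ J
      - (1 / 2) * mdot (J - ρ • Jcal μ (vonMises μ J)) (J - ρ • Jcal μ (vonMises μ J))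
      + ρ * Real.log ρ := by
  have hZ := Z_pos hμ J
  set Jc := Jcal μ (vonMises μ J) with hJc
  have hJcal : Jcal μ (fun A => ρ * vonMises μ J A) = ρ • Jc := by
    ext k l
    simp only [hJc, Jcal, Matrix.of_apply, Matrix.smul_apply, smul_eq_mul]
    rw [← integral_const_mul]
    congr 1; funext A; ring
  have hlog : ∀ A : Mat3, ρ * vonMises μ J A * Real.log (ρ * vonMises μ J A)
      = (ρ * (Real.log ρ - Real.log (Z μ J))) * vonMises μ J A
        + ρ * (vonMises μ J A * mdot J A) := by
    intro A
    have hM : vonMises μ J A = Real.exp (mdot J A) / Z μ J := rfl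
    have hMpos : 0 < vonMises μ J A := by
      rw [hM]; positivity
    rw [Real.log_mul hρ.ne' hMpos.ne']
    nth_rewrite 2 [hM]
    rw [Real.log_div (Real.exp_ne_zero _) hZ.ne', Real.log_exp]
    ring
  have hent : ∫ A, ρ * vonMises μ J A * Real.log (ρ * vonMises μ J A) ∂μ
      = ρ * (Real.log ρ - Real.log (Z μ J)) + ρ * mdot J Jc := by
    have : (fun A => ρ * vonMises μ J A * Real.log (ρ * vonMises μ J A))
        = fun A => (ρ * (Real.log ρ - Real.log (Z μ J))) * vonMises μ J A
            + ρ * (vonMises μ J A * mdot J A) := funext hlog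
    rw [this, integral_add ((integrable_vonMises hμ J).const_mul _)
      ((integrable_vonMises_mdot hμ J J).const_mul _)]
    rw [integral_const_mul, integral_const_mul, integral_vonMises hμ J,
      integral_vonMises_mdot hμ J J]
    ring
  have hW : W μ ρ J = (ρ * (Real.log ρ - Real.log (Z μ J)) + ρ * mdot J Jc)
      - (1/2) * mdot (ρ • Jc) (ρ • Jc) := by
    rw [W, freeEnergy, hJcal, hent]
  rw [hW, V]
  rw [mdot_sub_left, mdot_sub_right, mdot_sub_right, mdot_smul_left, mdot_smul_left,
    mdot_smul_right, mdot_smul_right, mdot_comm Jc J]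
  ring

end PartI

section Deriv
variable {μ : Measure Mat3}

lemma hasFDerivAt_mdot_right (A x : Mat3) :
    HasFDerivAt (fun x : Mat3 => mdot x A) (mdotCLM A) x := by
  have h : (fun x : Mat3 => mdot x A) = ⇑(mdotCLM A) := by
    funext y; simp [mdot_comm y A]
  rw [h]
  exact (mdotCLM A).hasFDerivAt

lemma hasFDerivAt_int_exp_mul (hμ : IsHaarSO3 μ) {g : Mat3 → ℝ} (Cg : ℝ)
    (hgc : Continuous g) (hgb : ∀ A ∈ SO3, |g A| ≤ Cg) (J : Mat3) :
    HasFDerivAt (fun x => ∫ A, Real.exp (mdot x A) * g A ∂μ)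
      (mdotCLM (Matrix.of fun k l => ∫ A, Real.exp (mdot J A) * g A * A k l ∂μ)) J := by
  haveI := isProb hμ
  set F' : Mat3 → Mat3 → Mat3 →L[ℝ] ℝ :=
    fun x A => (Real.exp (mdot x A) * g A) • mdotCLM A with hF'
  have hg0 : ∀ A ∈ SO3, (0:ℝ) ≤ Cg := fun A hA => (abs_nonneg _).trans (hgb A hA)
  have hbd : ∀ (x : Mat3), ‖x‖ ≤ ‖J‖ + 1 → ∀ A ∈ SO3,
      ‖F' x A‖ ≤ Real.exp (9/2 * (‖J‖+1)) * Cg * (9/2) := by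
    intro x hx A hA
    show ‖(Real.exp (mdot x A) * g A) • mdotCLM A‖ ≤ _
    have hns := norm_smul (Real.exp (mdot x A) * g A) (mdotCLM A)
    rw [Real.norm_eq_abs] at hns
    rw [hns, abs_mul, abs_of_nonneg (Real.exp_nonneg _)]
    have h1 : Real.exp (mdot x A) ≤ Real.exp (9/2 * (‖J‖+1)) := by
      apply Real.exp_le_exp.mpr
      have h := abs_mdot_le_of_SO3 x hA
      have h2 : 9/2 * ‖x‖ ≤ 9/2 * (‖J‖+1) := by nlinarith
      have := le_abs_self (mdot x A)
      linarith
    have h2 := hgb A hA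
    have h3 : ‖mdotCLM A‖ ≤ 9/2 := by
      have := mdotCLM_norm_le A
      have := SO3.norm_le hA
      nlinarith
    have e2 : (0:ℝ) ≤ |g A| := abs_nonneg _
    have e3 : (0:ℝ) ≤ ‖mdotCLM A‖ := norm_nonneg _
    have e4 : (0:ℝ) < Real.exp (9/2 * (‖J‖+1)) := Real.exp_pos _
    have t1 : Real.exp (mdot x A) * |g A| ≤ Real.exp (9/2*(‖J‖+1)) * Cg :=
      mul_le_mul h1 h2 e2 e4.le
    exact mul_le_mul t1 h3 e3 (mul_nonneg e4.le (hg0 A hA))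
  have key : HasFDerivAt (fun x => ∫ A, Real.exp (mdot x A) * g A ∂μ)
      (∫ A, F' J A ∂μ) J := by
    apply hasFDerivAt_integral_of_dominated_of_fderiv_le
      (bound := fun _ => Real.exp (9/2 * (‖J‖+1)) * Cg * (9/2)) (s := Metric.ball J 1)
        (Metric.ball_mem_nhds J one_pos)
    · exact Filter.Eventually.of_forall fun x =>
        ((continuous_expmdot x).mul hgc).aestronglyMeasurable
    · exact integrable_exp_mul hμ J Cg hgc hgb
    · exact (((continuous_expmdot J).mul hgc).smul continuous_mdotCLM).aestronglyMeasurable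
    · filter_upwards [ae_SO3 hμ] with A hA
      intro x hx
      apply hbd x _ A hA
      have h1 : dist x J < 1 := Metric.mem_ball.mp hx
      rw [dist_eq_norm] at h1
      have h2 := norm_sub_norm_le x J
      linarith
    · exact integrable_const _
    · refine Filter.Eventually.of_forall fun A => fun x _ => ?_
      have h1 := (hasFDerivAt_mdot_right A x).exp
      have h2 := h1.mul_const (g A)
      refine h2.congr_fderiv (Eq.symm ?_)
      rw [hF', smul_smul, mul_comm]
  refine key.congr_fderiv (Eq.symm ?_)
  have hintF' : Integrable (fun A => F' J A) μ := by
    refine Integrable.mono' (g := fun _ => Real.exp (9/2 * (‖J‖+1)) * Cg * (9/2))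
      (integrable_const _)
      (((continuous_expmdot J).mul hgc).smul continuous_mdotCLM).aestronglyMeasurable ?_
    filter_upwards [ae_SO3 hμ] with A hA
    exact hbd J (by linarith [norm_nonneg J]) A hA
  ext H
  rw [ContinuousLinearMap.integral_apply hintF']
  have hint : ∀ k l : Fin 3,
      Integrable (fun A => (Real.exp (mdot J A) * g A) * A k l) μ := by
    intro k l
    have h : (fun A => (Real.exp (mdot J A) * g A) * A k l)
        = fun A => Real.exp (mdot J A) * (g A * A k l) := by funext A; ring
    rw [h]
    refine integrable_exp_mul hμ J Cg (hgc.mul (continuous_entry k l)) fun A hA => ?_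
    rw [abs_mul]
    calc |g A| * |A k l| ≤ |g A| * 1 :=
          mul_le_mul_of_nonneg_left (SO3.entry_abs_le hA k l) (abs_nonneg _)
      _ ≤ Cg := by rw [mul_one]; exact hgb A hA
  have hswap := integral_mul_mdot (μ := μ) H hint
  simp only [mdotCLM_apply]
  rw [mdot_comm]
  rw [← hswap]
  congr 1
  funext A
  simp only [hF', ContinuousLinearMap.smul_apply, mdotCLM_apply, smul_eq_mul,
    mdot_comm A H]

end Deriv

section Deriv2
variable {μ : Measure Mat3}

lemma hasFDerivAt_Z (hμ : IsHaarSO3 μ) (J : Mat3) :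
    HasFDerivAt (Z μ) (mdotCLM (Z μ J • Jcal μ (vonMises μ J))) J := by
  have h := hasFDerivAt_int_exp_mul hμ (g := fun _ => 1) 1 continuous_const
    (fun A _ => by norm_num) J
  have hfun : (fun x => ∫ A, Real.exp (mdot x A) * 1 ∂μ) = Z μ := by
    funext x; simp [Z]
  have hmat : (Matrix.of fun k l => ∫ A, Real.exp (mdot J A) * 1 * A k l ∂μ)
      = Z μ J • Jcal μ (vonMises μ J) := by
    ext k l
    simp only [Matrix.of_apply, Matrix.smul_apply, smul_eq_mul, mul_one,
      Jcal_vonMises_apply hμ]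
    rw [mul_div_cancel₀ _ (Z_ne hμ J)]
  rw [hfun, hmat] at h
  exact h

lemma hasFDerivAt_logZ (hμ : IsHaarSO3 μ) (J : Mat3) :
    HasFDerivAt (fun x => Real.log (Z μ x)) (mdotCLM (Jcal μ (vonMises μ J))) J := by
  have h := (hasFDerivAt_Z hμ J).log (Z_ne hμ J)
  refine h.congr_fderiv (Eq.symm ?_)
  ext H
  simp only [mdotCLM_apply, ContinuousLinearMap.smul_apply, smul_eq_mul,
    mdot_smul_left]
  rw [← mul_assoc, inv_mul_cancel₀ (Z_ne hμ J), one_mul]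

lemma isBoundedBilinearMap_mdot :
    IsBoundedBilinearMap ℝ (fun p : Mat3 × Mat3 => mdot p.1 p.2) where
  add_left := fun A B C => mdot_add_left A B C
  smul_left := fun c A B => by simpa using mdot_smul_left c A B
  add_right := fun A B C => mdot_add_right A B C
  smul_right := fun c A B => by simpa using mdot_smul_right c A B
  bound := ⟨9/2, by norm_num, fun A B => by
    simpa [Real.norm_eq_abs, mul_assoc] using abs_mdot_le A B⟩

lemma hasFDerivAt_half_mdot_self (J : Mat3) :
    HasFDerivAt (fun x : Mat3 => (1/2) * mdot x x) (mdotCLM J) J := by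
  have hd : HasFDerivAt (fun x : Mat3 => (x, x))
      ((ContinuousLinearMap.id ℝ Mat3).prod (ContinuousLinearMap.id ℝ Mat3)) J :=
    ((ContinuousLinearMap.id ℝ Mat3).prod (ContinuousLinearMap.id ℝ Mat3)).hasFDerivAt
  have h : HasFDerivAt (fun x : Mat3 => mdot x x)
      ((isBoundedBilinearMap_mdot.deriv (J, J)).comp
        ((ContinuousLinearMap.id ℝ Mat3).prod (ContinuousLinearMap.id ℝ Mat3))) J :=
    HasFDerivAt.comp (f := fun x : Mat3 => (x, x)) J
      (isBoundedBilinearMap_mdot.hasFDerivAt (J, J)) hd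
  have h2 := h.const_mul (1/2)
  refine h2.congr_fderiv (Eq.symm ?_)
  ext H
  simp only [mdotCLM_apply, ContinuousLinearMap.smul_apply, smul_eq_mul,
    ContinuousLinearMap.coe_comp', Function.comp_apply, ContinuousLinearMap.prod_apply,
    ContinuousLinearMap.coe_id', id_eq, IsBoundedBilinearMap.deriv_apply]
  rw [mdot_comm H J]
  ring

lemma hasFDerivAt_V (hμ : IsHaarSO3 μ) (ρ : ℝ) (J : Mat3) :
    HasFDerivAt (V μ ρ) (mdotCLM (J - ρ • Jcal μ (vonMises μ J))) J := by
  have h := (hasFDerivAt_half_mdot_self J).sub ((hasFDerivAt_logZ hμ J).const_mul ρ)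
  have hfun : (fun x => (1/2) * mdot x x - ρ * Real.log (Z μ x)) = V μ ρ := rfl
  rw [← hfun]
  refine h.congr_fderiv (Eq.symm ?_)
  ext H
  simp only [mdotCLM_apply, ContinuousLinearMap.sub_apply, ContinuousLinearMap.smul_apply,
    smul_eq_mul, mdot_sub_left, mdot_smul_left]

end Deriv2

section Deriv3
variable {μ : Measure Mat3}

/-- Second-moment matrix entry-family. -/
noncomputable def SMat (μ : Measure Mat3) (J : Mat3) (k l : Fin 3) : Mat3 :=
  Matrix.of fun p q => ∫ A, Real.exp (mdot J A) * A k l * A p q ∂μ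

/-- Derivative matrix of the `(k,l)` entry of `J ↦ 𝒥[M_J]`. -/
noncomputable def CMat (μ : Measure Mat3) (J : Mat3) (k l : Fin 3) : Mat3 :=
  (Z μ J)⁻¹ • SMat μ J k l
    - (Jcal μ (vonMises μ J) k l) • Jcal μ (vonMises μ J)

lemma hasFDerivAt_n (hμ : IsHaarSO3 μ) (J : Mat3) (k l : Fin 3) :
    HasFDerivAt (fun x => Jcal μ (vonMises μ x) k l) (mdotCLM (CMat μ J k l)) J := by
  have hN := hasFDerivAt_int_exp_mul hμ (g := fun A => A k l) 1 (continuous_entry k l)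
    (fun A hA => SO3.entry_abs_le hA k l) J
  have hZinv : HasFDerivAt (fun x => (Z μ x)⁻¹)
      ((-(ContinuousLinearMap.mulLeftRight ℝ ℝ (Z μ J)⁻¹ (Z μ J)⁻¹)).comp
        (mdotCLM (Z μ J • Jcal μ (vonMises μ J)))) J :=
    HasFDerivAt.comp (f := fun x => Z μ x) J (hasFDerivAt_inv' (Z_ne hμ J))
      (hasFDerivAt_Z hμ J)
  have h := hN.mul hZinv
  have hfun : (fun x => (∫ A, Real.exp (mdot x A) * A k l ∂μ) * (Z μ x)⁻¹)
      = fun x => Jcal μ (vonMises μ x) k l := by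
    funext x
    rw [Jcal_vonMises_apply hμ, div_eq_mul_inv]
  rw [← hfun]
  refine h.congr_fderiv (Eq.symm ?_)
  ext H
  simp only [mdotCLM_apply, ContinuousLinearMap.add_apply, ContinuousLinearMap.smul_apply,
    smul_eq_mul, ContinuousLinearMap.coe_comp', Function.comp_apply,
    ContinuousLinearMap.neg_apply, ContinuousLinearMap.mulLeftRight_apply,
    CMat, SMat, mdot_sub_left, mdot_smul_left, Jcal_vonMises_apply hμ]
  have hZ := Z_ne hμ J
  field_simp
  ring
end Deriv3

section Deriv4
variable {μ : Measure Mat3}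

lemma mdot_std (k l : Fin 3) (x : Mat3) :
    mdot (Matrix.single k l (2:ℝ)) x = x k l := by
  rw [mdot_eq_sum]
  fin_cases k <;> fin_cases l <;>
    simp [Fin.sum_univ_three, Matrix.single] <;> ring

lemma hasFDerivAt_coord (k l : Fin 3) (x : Mat3) :
    HasFDerivAt (fun y : Mat3 => y k l) (mdotCLM (Matrix.single k l (2:ℝ))) x := by
  have h : (fun y : Mat3 => y k l) = ⇑(mdotCLM (Matrix.single k l (2:ℝ))) := by
    funext y; simp [mdot_std]
  rw [h]
  exact (mdotCLM _).hasFDerivAt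

lemma hasFDerivAt_W (hμ : IsHaarSO3 μ) {ρ : ℝ} (hρ : 0 < ρ) (J : Mat3) :
    HasFDerivAt (W μ ρ)
      ((ρ/2) • ∑ k : Fin 3, ∑ l : Fin 3,
        ((J - ρ • Jcal μ (vonMises μ J)) k l) • mdotCLM (CMat μ J k l)) J := by
  have hWfun : W μ ρ = fun x =>
      (ρ/2) * (∑ k : Fin 3, ∑ l : Fin 3, x k l * Jcal μ (vonMises μ x) k l)
      - ρ * Real.log (Z μ x)
      - (ρ^2/4) * (∑ k : Fin 3, ∑ l : Fin 3,
          Jcal μ (vonMises μ x) k l * Jcal μ (vonMises μ x) k l)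
      + ρ * Real.log ρ := by
    funext x
    rw [part_i hμ hρ x, V]
    rw [mdot_sub_left, mdot_sub_right, mdot_sub_right, mdot_smul_left, mdot_smul_left,
      mdot_smul_right, mdot_smul_right]
    rw [mdot_eq_sum x (Jcal μ (vonMises μ x)), mdot_comm (Jcal μ (vonMises μ x)) x,
      mdot_eq_sum x (Jcal μ (vonMises μ x)),
      mdot_eq_sum (Jcal μ (vonMises μ x)) (Jcal μ (vonMises μ x))]
    ring
  have h1 : HasFDerivAt
      (fun x => ∑ k : Fin 3, ∑ l : Fin 3, x k l * Jcal μ (vonMises μ x) k l)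
      (∑ k : Fin 3, ∑ l : Fin 3,
        (J k l • mdotCLM (CMat μ J k l)
          + Jcal μ (vonMises μ J) k l • mdotCLM (Matrix.single k l (2:ℝ)))) J := by
    apply HasFDerivAt.fun_sum
    intro k _
    apply HasFDerivAt.fun_sum
    intro l _
    exact (hasFDerivAt_coord k l J).mul (hasFDerivAt_n hμ J k l)
  have h3 : HasFDerivAt
      (fun x => ∑ k : Fin 3, ∑ l : Fin 3,
        Jcal μ (vonMises μ x) k l * Jcal μ (vonMises μ x) k l)
      (∑ k : Fin 3, ∑ l : Fin 3,
        (Jcal μ (vonMises μ J) k l • mdotCLM (CMat μ J k l)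
          + Jcal μ (vonMises μ J) k l • mdotCLM (CMat μ J k l))) J := by
    apply HasFDerivAt.fun_sum
    intro k _
    apply HasFDerivAt.fun_sum
    intro l _
    exact (hasFDerivAt_n hμ J k l).mul (hasFDerivAt_n hμ J k l)
  have h1' := h1.const_mul (ρ/2)
  have h2' := (hasFDerivAt_logZ hμ J).const_mul ρ
  have h3' := h3.const_mul (ρ^2/4)
  have htot := ((h1'.sub h2').sub h3').add_const (ρ * Real.log ρ)
  rw [hWfun]
  refine htot.congr_fderiv (Eq.symm ?_)
  ext H
  simp only [ContinuousLinearMap.smul_apply, ContinuousLinearMap.sub_apply,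
    ContinuousLinearMap.add_apply, ContinuousLinearMap.sum_apply,
    ContinuousLinearMap.coe_smul', Pi.smul_apply, mdotCLM_apply, smul_eq_mul,
    mdot_std, Matrix.sub_apply, Matrix.smul_apply]
  rw [mdot_eq_sum (Jcal μ (vonMises μ J)) H]
  simp only [Fin.sum_univ_three, Matrix.sub_apply, Matrix.smul_apply, smul_eq_mul]
  ring

end Deriv4

section Rot

lemma mdot_mul_right (B P A : Mat3) : mdot B (P * A) = mdot (B * Aᵀ) P := by
  simp [mdot, Matrix.transpose_mul, Matrix.mul_assoc]

lemma mem_SO3_one : (1 : Mat3) ∈ SO3 := by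
  constructor
  · simp
  · simp

lemma mem_SO3_D1 : (!![1,0,0;0,-1,0;0,0,-1] : Mat3) ∈ SO3 := by
  have hT : (!![1,0,0;0,-1,0;0,0,-1] : Mat3)ᵀ = !![1,0,0;0,-1,0;0,0,-1] := by
    ext i j; fin_cases i <;> fin_cases j <;> rfl
  constructor
  · rw [hT, Matrix.mul_fin_three, Matrix.one_fin_three]
    ext i j; fin_cases i <;> fin_cases j <;> norm_num
  · norm_num [Matrix.det_fin_three, Matrix.cons_val_two]

lemma mem_SO3_D2 : (!![-1,0,0;0,1,0;0,0,-1] : Mat3) ∈ SO3 := by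
  have hT : (!![-1,0,0;0,1,0;0,0,-1] : Mat3)ᵀ = !![-1,0,0;0,1,0;0,0,-1] := by
    ext i j; fin_cases i <;> fin_cases j <;> rfl
  constructor
  · rw [hT, Matrix.mul_fin_three, Matrix.one_fin_three]
    ext i j; fin_cases i <;> fin_cases j <;> norm_num
  · norm_num [Matrix.det_fin_three, Matrix.cons_val_two]

lemma mem_SO3_D3 : (!![-1,0,0;0,-1,0;0,0,1] : Mat3) ∈ SO3 := by
  have hT : (!![-1,0,0;0,-1,0;0,0,1] : Mat3)ᵀ = !![-1,0,0;0,-1,0;0,0,1] := by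
    ext i j; fin_cases i <;> fin_cases j <;> rfl
  constructor
  · rw [hT, Matrix.mul_fin_three, Matrix.one_fin_three]
    ext i j; fin_cases i <;> fin_cases j <;> norm_num
  · norm_num [Matrix.det_fin_three, Matrix.cons_val_two]

lemma mem_SO3_R01 : (!![0,-1,0;1,0,0;0,0,1] : Mat3) ∈ SO3 := by
  have hT : (!![0,-1,0;1,0,0;0,0,1] : Mat3)ᵀ = !![0,1,0;-1,0,0;0,0,1] := by
    ext i j; fin_cases i <;> fin_cases j <;> rfl
  constructor
  · rw [hT, Matrix.mul_fin_three, Matrix.one_fin_three]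
    ext i j; fin_cases i <;> fin_cases j <;> norm_num
  · norm_num [Matrix.det_fin_three, Matrix.cons_val_two]

lemma mem_SO3_Q01 : (!![0,1,0;1,0,0;0,0,-1] : Mat3) ∈ SO3 := by
  have hT : (!![0,1,0;1,0,0;0,0,-1] : Mat3)ᵀ = !![0,1,0;1,0,0;0,0,-1] := by
    ext i j; fin_cases i <;> fin_cases j <;> rfl
  constructor
  · rw [hT, Matrix.mul_fin_three, Matrix.one_fin_three]
    ext i j; fin_cases i <;> fin_cases j <;> norm_num
  · norm_num [Matrix.det_fin_three, Matrix.cons_val_two]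

lemma mem_SO3_R12 : (!![1,0,0;0,0,-1;0,1,0] : Mat3) ∈ SO3 := by
  have hT : (!![1,0,0;0,0,-1;0,1,0] : Mat3)ᵀ = !![1,0,0;0,0,1;0,-1,0] := by
    ext i j; fin_cases i <;> fin_cases j <;> rfl
  constructor
  · rw [hT, Matrix.mul_fin_three, Matrix.one_fin_three]
    ext i j; fin_cases i <;> fin_cases j <;> norm_num
  · norm_num [Matrix.det_fin_three, Matrix.cons_val_two]

lemma mem_SO3_Q12 : (!![-1,0,0;0,0,1;0,1,0] : Mat3) ∈ SO3 := by
  have hT : (!![-1,0,0;0,0,1;0,1,0] : Mat3)ᵀ = !![-1,0,0;0,0,1;0,1,0] := by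
    ext i j; fin_cases i <;> fin_cases j <;> rfl
  constructor
  · rw [hT, Matrix.mul_fin_three, Matrix.one_fin_three]
    ext i j; fin_cases i <;> fin_cases j <;> norm_num
  · norm_num [Matrix.det_fin_three, Matrix.cons_val_two]

lemma mem_SO3_R02 : (!![0,0,1;0,1,0;-1,0,0] : Mat3) ∈ SO3 := by
  have hT : (!![0,0,1;0,1,0;-1,0,0] : Mat3)ᵀ = !![0,0,-1;0,1,0;1,0,0] := by
    ext i j; fin_cases i <;> fin_cases j <;> rfl
  constructor
  · rw [hT, Matrix.mul_fin_three, Matrix.one_fin_three]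
    ext i j; fin_cases i <;> fin_cases j <;> norm_num
  · norm_num [Matrix.det_fin_three, Matrix.cons_val_two]

lemma mem_SO3_Q02 : (!![0,0,1;0,-1,0;1,0,0] : Mat3) ∈ SO3 := by
  have hT : (!![0,0,1;0,-1,0;1,0,0] : Mat3)ᵀ = !![0,0,1;0,-1,0;1,0,0] := by
    ext i j; fin_cases i <;> fin_cases j <;> rfl
  constructor
  · rw [hT, Matrix.mul_fin_three, Matrix.one_fin_three]
    ext i j; fin_cases i <;> fin_cases j <;> norm_num
  · norm_num [Matrix.det_fin_three, Matrix.cons_val_two]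

end Rot

section RotMain
variable {μ : Measure Mat3}

lemma mdot_ae_const_eq_zero (hμ : IsHaarSO3 μ) {B : Mat3} {c : ℝ}
    (h : ∀ᵐ A ∂μ, mdot B A = c) : B = 0 := by
  haveI := isProb hμ
  haveI : (MeasureTheory.ae μ).NeBot := by
    refine MeasureTheory.ae_neBot.mpr ?_
    intro h0
    have h1 := measure_univ (μ := μ)
    rw [h0] at h1
    simp at h1
  have hP : ∀ P, P ∈ SO3 → ∀ᵐ A ∂μ, mdot B (P * A) = c := by
    intro P hPm
    have hcont : Continuous fun A : Mat3 => P * A := by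
      apply continuous_pi; intro i; apply continuous_pi; intro j
      simp only [Matrix.mul_apply]
      exact continuous_finset_sum _ fun k _ => continuous_const.mul (continuous_entry k j)
    have hmset : MeasurableSet {x : Mat3 | mdot B x = c} :=
      (continuous_mdot_right B).measurable (measurableSet_singleton c)
    have hmap := hμ.2.2 P hPm
    have h2 : ∀ᵐ x ∂(Measure.map (fun A => P * A) μ), mdot B x = c := by
      rw [hmap]; exact h
    exact (MeasureTheory.ae_map_iff hcont.measurable.aemeasurable hmset).mp h2
  have e := (ae_SO3 hμ).and ((hP _ mem_SO3_one).and ((hP _ mem_SO3_D1).and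
    ((hP _ mem_SO3_D2).and ((hP _ mem_SO3_D3).and ((hP _ mem_SO3_R01).and
    ((hP _ mem_SO3_Q01).and ((hP _ mem_SO3_R12).and ((hP _ mem_SO3_Q12).and
    ((hP _ mem_SO3_R02).and (hP _ mem_SO3_Q02))))))))))
  obtain ⟨A₀, hSO, h0, h1, h2, h3, h4, h5, h6, h7, h8, h9⟩ := e.exists
  rw [mdot_mul_right] at h0 h1 h2 h3 h4 h5 h6 h7 h8 h9
  set L := B * A₀ᵀ with hLdef
  rw [mdot_eq_sum] at h0 h1 h2 h3 h4 h5 h6 h7 h8 h9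
  norm_num [Fin.sum_univ_three, Matrix.one_apply, Matrix.vecHead, Matrix.vecTail, Matrix.cons_val_two,
    Function.comp] at h0 h1 h2 h3 h4 h5 h6 h7 h8 h9
  have e00 : L 0 0 = 0 := by linarith
  have e11 : L 1 1 = 0 := by linarith
  have e22 : L 2 2 = 0 := by linarith
  have e01 : L 0 1 = 0 := by linarith
  have e10 : L 1 0 = 0 := by linarith
  have e12 : L 1 2 = 0 := by linarith
  have e21 : L 2 1 = 0 := by linarith
  have e02 : L 0 2 = 0 := by linarith
  have e20 : L 2 0 = 0 := by linarith
  have hL : L = 0 := by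
    ext i j
    simp only [Matrix.zero_apply]
    fin_cases i <;> fin_cases j
    · exact e00
    · exact e01
    · exact e02
    · exact e10
    · exact e11
    · exact e12
    · exact e20
    · exact e21
    · exact e22
  have : B = L * A₀ := by
    rw [hLdef, Matrix.mul_assoc, hSO.1, Matrix.mul_one]
  rw [this, hL, Matrix.zero_mul]

end RotMain

section Final
variable {μ : Measure Mat3}

lemma integrable_exp_mul2 (hμ : IsHaarSO3 μ) (J : Mat3) (k l p q : Fin 3) :
    Integrable (fun A => Real.exp (mdot J A) * A k l * A p q) μ := by
  have h : (fun A : Mat3 => Real.exp (mdot J A) * A k l * A p q)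
      = fun A => Real.exp (mdot J A) * (A k l * A p q) := by funext A; ring
  rw [h]
  refine integrable_exp_mul hμ J 1 ((continuous_entry k l).mul (continuous_entry p q))
    fun A hA => ?_
  rw [abs_mul]
  calc |A k l| * |A p q| ≤ 1 * 1 :=
        mul_le_mul (SO3.entry_abs_le hA k l) (SO3.entry_abs_le hA p q)
          (abs_nonneg _) zero_le_one
    _ = 1 := by norm_num

lemma integrable_exp_mdot_entry (hμ : IsHaarSO3 μ) (J B : Mat3) (k l : Fin 3) :
    Integrable (fun A => Real.exp (mdot J A) * mdot B A * A k l) μ := by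
  have h : (fun A : Mat3 => Real.exp (mdot J A) * mdot B A * A k l)
      = fun A => Real.exp (mdot J A) * (mdot B A * A k l) := by funext A; ring
  rw [h]
  refine integrable_exp_mul hμ J (9/2*‖B‖)
    ((continuous_mdot_right B).mul (continuous_entry k l)) fun A hA => ?_
  rw [abs_mul]
  calc |mdot B A| * |A k l| ≤ (9/2*‖B‖) * 1 :=
        mul_le_mul (abs_mdot_le_of_SO3 B hA) (SO3.entry_abs_le hA k l)
          (abs_nonneg _) (by positivity)
    _ = 9/2*‖B‖ := by norm_num

lemma integrable_exp_mdot_sq (hμ : IsHaarSO3 μ) (J B : Mat3) :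
    Integrable (fun A => Real.exp (mdot J A) * mdot B A * mdot B A) μ := by
  have h : (fun A : Mat3 => Real.exp (mdot J A) * mdot B A * mdot B A)
      = fun A => Real.exp (mdot J A) * (mdot B A * mdot B A) := by funext A; ring
  rw [h]
  refine integrable_exp_mul hμ J ((9/2*‖B‖)*(9/2*‖B‖))
    ((continuous_mdot_right B).mul (continuous_mdot_right B)) fun A hA => ?_
  rw [abs_mul]
  exact mul_le_mul (abs_mdot_le_of_SO3 B hA) (abs_mdot_le_of_SO3 B hA)
    (abs_nonneg _) (by positivity)

lemma mdot_SMat (hμ : IsHaarSO3 μ) (J B : Mat3) (k l : Fin 3) :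
    mdot B (SMat μ J k l) = ∫ A, Real.exp (mdot J A) * mdot B A * A k l ∂μ := by
  have h := integral_mul_mdot (μ := μ) B (f := fun A => Real.exp (mdot J A) * A k l)
    (fun p q => integrable_exp_mul2 hμ J k l p q)
  have h2 : (fun A => Real.exp (mdot J A) * A k l * mdot B A)
      = fun A => Real.exp (mdot J A) * mdot B A * A k l := by funext A; ring
  rw [h2] at h
  exact h.symm

lemma sum_key (hμ : IsHaarSO3 μ) (J B : Mat3) :
    ∑ k : Fin 3, ∑ l : Fin 3, B k l * mdot (CMat μ J k l) B
      = 2 * ((Z μ J)⁻¹ * (∫ A, Real.exp (mdot J A) * mdot B A * mdot B A ∂μ)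
          - (mdot B (Jcal μ (vonMises μ J)))^2) := by
  have hS := integral_mul_mdot (μ := μ) B
    (f := fun A => Real.exp (mdot J A) * mdot B A)
    (fun k l => integrable_exp_mdot_entry hμ J B k l)
  -- hS : ∫ (E ℓ) ℓ = mdot B (of fun k l => ∫ E ℓ A k l)
  have hterm : ∀ k l : Fin 3, mdot (CMat μ J k l) B
      = (Z μ J)⁻¹ * mdot B (SMat μ J k l)
        - Jcal μ (vonMises μ J) k l * mdot B (Jcal μ (vonMises μ J)) := by
    intro k l
    rw [CMat, mdot_sub_left, mdot_smul_left, mdot_smul_left,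
      mdot_comm (SMat μ J k l) B, mdot_comm (Jcal μ (vonMises μ J)) B]
  have hsplit : ∑ k : Fin 3, ∑ l : Fin 3, B k l * mdot (CMat μ J k l) B
      = (Z μ J)⁻¹ * (∑ k : Fin 3, ∑ l : Fin 3, B k l * mdot B (SMat μ J k l))
        - (∑ k : Fin 3, ∑ l : Fin 3, B k l * Jcal μ (vonMises μ J) k l)
            * mdot B (Jcal μ (vonMises μ J)) := by
    rw [Finset.mul_sum, Finset.sum_mul, ← Finset.sum_sub_distrib]
    refine Finset.sum_congr rfl fun k _ => ?_
    rw [Finset.mul_sum, Finset.sum_mul, ← Finset.sum_sub_distrib]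
    refine Finset.sum_congr rfl fun l _ => ?_
    rw [hterm k l]
    ring
  have hsum1 : ∑ k : Fin 3, ∑ l : Fin 3, B k l * mdot B (SMat μ J k l)
      = 2 * ∫ A, Real.exp (mdot J A) * mdot B A * mdot B A ∂μ := by
    have hx : (∫ A, Real.exp (mdot J A) * mdot B A * mdot B A ∂μ)
        = mdot B (Matrix.of fun p q => ∫ A, Real.exp (mdot J A) * mdot B A * A p q ∂μ) := hS
    rw [hx, mdot_eq_sum]
    simp only [Matrix.of_apply, mdot_SMat hμ J B]
    ring
  have hsum2 : ∑ k : Fin 3, ∑ l : Fin 3, B k l * Jcal μ (vonMises μ J) k l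
      = 2 * mdot B (Jcal μ (vonMises μ J)) := by
    rw [mdot_eq_sum]; ring
  rw [hsplit, hsum1, hsum2]
  ring

end Final

section Final2
variable {μ : Measure Mat3}

lemma first_moment (hμ : IsHaarSO3 μ) (J B : Mat3) :
    (∫ A, Real.exp (mdot J A) * mdot B A ∂μ)
      = Z μ J * mdot B (Jcal μ (vonMises μ J)) := by
  have h := integral_vonMises_mdot hμ J B
  have h2 : (fun A => vonMises μ J A * mdot B A)
      = fun A => (Real.exp (mdot J A) * mdot B A) / Z μ J := by
    funext A; simp [vonMises]; ring
  rw [h2, integral_div, div_eq_iff (Z_ne hμ J)] at h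
  linarith [h]

lemma variance_zero (hμ : IsHaarSO3 μ) (J B : Mat3)
    (hz : (Z μ J)⁻¹ * (∫ A, Real.exp (mdot J A) * mdot B A * mdot B A ∂μ)
      - (mdot B (Jcal μ (vonMises μ J)))^2 = 0) : B = 0 := by
  set m := mdot B (Jcal μ (vonMises μ J)) with hm
  set S := ∫ A, Real.exp (mdot J A) * mdot B A * mdot B A ∂μ with hSdef
  have hZ := Z_pos hμ J
  have hT := first_moment hμ J B
  have hSm : S = m^2 * Z μ J := by
    have : (Z μ J)⁻¹ * S = m^2 := by linarith
    field_simp at this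
    linarith
  have hint : Integrable (fun A => Real.exp (mdot J A) * (mdot B A - m)^2) μ := by
    have h : (fun A => Real.exp (mdot J A) * (mdot B A - m)^2)
        = fun A => (Real.exp (mdot J A) * mdot B A * mdot B A
            - (2*m) * (Real.exp (mdot J A) * mdot B A)) + m^2 * Real.exp (mdot J A) := by
      funext A; ring
    rw [h]
    exact ((integrable_exp_mdot_sq hμ J B).sub
      ((integrable_exp_mul hμ J (9/2*‖B‖) (continuous_mdot_right B)
        (fun A hA => abs_mdot_le_of_SO3 B hA)).const_mul (2*m))).add
      ((integrable_exp hμ J).const_mul (m^2))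
  have hQ : ∫ A, Real.exp (mdot J A) * (mdot B A - m)^2 ∂μ = 0 := by
    have h : (fun A => Real.exp (mdot J A) * (mdot B A - m)^2)
        = fun A => (Real.exp (mdot J A) * mdot B A * mdot B A
            - (2*m) * (Real.exp (mdot J A) * mdot B A)) + m^2 * Real.exp (mdot J A) := by
      funext A; ring
    rw [h, integral_add, integral_sub]
    · rw [integral_const_mul, integral_const_mul, hT]
      have hZZ : ∫ A, Real.exp (mdot J A) ∂μ = Z μ J := rfl
      rw [hZZ, ← hSdef, hSm]
      ring
    · exact integrable_exp_mdot_sq hμ J B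
    · exact (integrable_exp_mul hμ J (9/2*‖B‖) (continuous_mdot_right B)
        (fun A hA => abs_mdot_le_of_SO3 B hA)).const_mul (2*m)
    · exact (integrable_exp_mdot_sq hμ J B).sub
        ((integrable_exp_mul hμ J (9/2*‖B‖) (continuous_mdot_right B)
          (fun A hA => abs_mdot_le_of_SO3 B hA)).const_mul (2*m))
    · exact (integrable_exp hμ J).const_mul (m^2)
  have hae : (fun A => Real.exp (mdot J A) * (mdot B A - m)^2) =ᵐ[μ] 0 := by
    refine (integral_eq_zero_iff_of_nonneg ?_ hint).mp hQ
    intro A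
    positivity
  have hae2 : ∀ᵐ A ∂μ, mdot B A = m := by
    filter_upwards [hae] with A hA
    have hA' : Real.exp (mdot J A) * (mdot B A - m)^2 = 0 := hA
    have h2 : (mdot B A - m)^2 = 0 := by
      rcases mul_eq_zero.mp hA' with h | h
      · exact absurd h (Real.exp_ne_zero _)
      · exact h
    have := pow_eq_zero_iff (n := 2) (by norm_num) |>.mp h2
    linarith [this]
  exact mdot_ae_const_eq_zero hμ hae2

end Final2


theorem W_eq_V_and_critical_points_aux (μ : Measure Mat3) (hμ : IsHaarSO3 μ)
    (ρ : ℝ) (hρ : 0 < ρ) :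
    (∀ J : Mat3,
      W μ ρ J = V μ ρ J
        - (1 / 2) * mdot (J - ρ • Jcal μ (vonMises μ J)) (J - ρ • Jcal μ (vonMises μ J))
        + ρ * Real.log ρ) ∧
    (∀ J : Mat3,
      (fderiv ℝ (W μ ρ) J = 0 ↔ fderiv ℝ (V μ ρ) J = 0) ∧
      (fderiv ℝ (V μ ρ) J = 0 ↔ J = ρ • Jcal μ (vonMises μ J))) := by
  constructor
  · exact fun J => part_i hμ hρ J
  · intro J
    have hfV : fderiv ℝ (V μ ρ) J = mdotCLM (J - ρ • Jcal μ (vonMises μ J)) :=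
      (hasFDerivAt_V hμ ρ J).fderiv
    have hfW : fderiv ℝ (W μ ρ) J
        = (ρ/2) • ∑ k : Fin 3, ∑ l : Fin 3,
            ((J - ρ • Jcal μ (vonMises μ J)) k l) • mdotCLM (CMat μ J k l) :=
      (hasFDerivAt_W hμ hρ J).fderiv
    have iffV : fderiv ℝ (V μ ρ) J = 0 ↔ J = ρ • Jcal μ (vonMises μ J) := by
      rw [hfV]
      constructor
      · intro h
        have h2 : mdot (J - ρ • Jcal μ (vonMises μ J)) (J - ρ • Jcal μ (vonMises μ J)) = 0 := by
          have h3 := congrArg (fun L : Mat3 →L[ℝ] ℝ =>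
            L (J - ρ • Jcal μ (vonMises μ J))) h
          simpa using h3
        exact sub_eq_zero.mp (eq_zero_of_mdot_self _ h2)
      · intro h
        rw [sub_eq_zero.mpr h, mdotCLM_zero]
    refine ⟨?_, iffV⟩
    constructor
    · intro hW
      set B := J - ρ • Jcal μ (vonMises μ J) with hB
      have happ : (ρ/2) * (∑ k : Fin 3, ∑ l : Fin 3, B k l * mdot (CMat μ J k l) B) = 0 := by
        have h3 := congrArg (fun L : Mat3 →L[ℝ] ℝ => L B) (hfW.symm.trans hW)
        simp only [ContinuousLinearMap.smul_apply, ContinuousLinearMap.sum_apply,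
          ContinuousLinearMap.coe_smul', Pi.smul_apply, mdotCLM_apply, smul_eq_mul,
          ContinuousLinearMap.zero_apply] at h3
        rw [← h3]
      rw [sum_key hμ J B] at happ
      have hz : (Z μ J)⁻¹ * (∫ A, Real.exp (mdot J A) * mdot B A * mdot B A ∂μ)
          - (mdot B (Jcal μ (vonMises μ J)))^2 = 0 := by
        rcases mul_eq_zero.mp happ with h | h
        · exact absurd h (by positivity)
        · linarith
      have hB0 : B = 0 := variance_zero hμ J B hz
      rw [iffV]
      exact sub_eq_zero.mp hB0
    · intro hV
      have hB0 : J - ρ • Jcal μ (vonMises μ J) = 0 := sub_eq_zero.mpr (iffV.mp hV)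
      rw [hfW, hB0]
      simp

end TopSec

/-- (i) `W(J) = V(J) − ½∥J − ρ𝒥[M_J]∥² + ρ ln ρ`; (ii) `J` is a critical point of `W` iff
it is a critical point of `V`, iff `J = ρ 𝒥[M_J]` (compatibility equation). -/
theorem W_eq_V_and_critical_points (μ : Measure Mat3) (hμ : IsHaarSO3 μ)
    (ρ : ℝ) (hρ : 0 < ρ) :
    (∀ J : Mat3,
      W μ ρ J = V μ ρ J
        - (1 / 2) * mdot (J - ρ • Jcal μ (vonMises μ J)) (J - ρ • Jcal μ (vonMises μ J))
        + ρ * Real.log ρ) ∧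
    (∀ J : Mat3,
      (fderiv ℝ (W μ ρ) J = 0 ↔ fderiv ℝ (V μ ρ) J = 0) ∧
      (fderiv ℝ (V μ ρ) J = 0 ↔ J = ρ • Jcal μ (vonMises μ J))) := by
  exact W_eq_V_and_critical_points_aux μ hμ ρ hρ
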